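/- Let D ≥ 1, let ι be a finite index type, let v : ι → ℝ^D be a linearly independent family, let L, g : ι → ℝ be positive, and let W : ℝ → ℝ. Then there exists an invertible linear map G of ℝ^D such that for every linear map F : ℝ^D → ℝ^D: Σ_{i ∈ ι} W(‖F(v i)‖ / (L i · g i)) = Σ_{i ∈ ι} W(‖(F ∘ G⁻¹)(v i)‖ / L i). (For a homogeneously growing lattice of order 1 — a 'fluid' — the multiplicative decomposition of the deformation gradient holds: W_g(F) = W_i(F·G⁻¹) for all F.) -/

import Mathlib

open scoped BigOperators

lemma sumExtend_inl {K V ι : Type} [Field K] [AddCommGroup V] [Module K V] (v : ι → V)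
    (hv : LinearIndependent K v) (i : ι) : Module.Basis.sumExtend hv (Sum.inl i) = v i := by
  simp only [Module.Basis.sumExtend, Module.Basis.reindex_apply, Equiv.symm_symm, Equiv.trans_apply,
    Equiv.sumCongr_apply, Sum.map_inl, Module.Basis.extend_apply_self]
  rfl

/-- For a homogeneously growing lattice of order 1 (a "fluid") the multiplicative decomposition
of the deformation gradient holds: there is an invertible linear map `G` with
`W_g(F) = W_i(F ∘ G⁻¹)` for all linear maps `F`. -/
theorem multiplicative_decomposition_order_one
    (D : ℕ) (hD : 1 ≤ D) (ι : Type) [Fintype ι]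
    (v : ι → EuclideanSpace ℝ (Fin D)) (hv : LinearIndependent ℝ v)
    (L g : ι → ℝ) (hL : ∀ i, 0 < L i) (hg : ∀ i, 0 < g i) (W : ℝ → ℝ) :
    ∃ G : EuclideanSpace ℝ (Fin D) ≃ₗ[ℝ] EuclideanSpace ℝ (Fin D),
      ∀ F : EuclideanSpace ℝ (Fin D) →ₗ[ℝ] EuclideanSpace ℝ (Fin D),
        (∑ i : ι, W (‖F (v i)‖ / (L i * g i))) =
          ∑ i : ι, W (‖(F ∘ₗ G.symm.toLinearMap) (v i)‖ / L i) := by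
  classical
  set b := Module.Basis.sumExtend hv with hb
  set w : (ι ⊕ Module.Basis.sumExtendIndex hv) → ℝ := fun j => Sum.elim g (fun _ => 1) j with hwdef
  have hw : ∀ j, IsUnit (w j) := by
    rintro (i | x)
    · exact (ne_of_gt (hg i)).isUnit
    · exact isUnit_one
  set b' := b.isUnitSMul hw with hb'
  refine ⟨b.equiv b' (Equiv.refl _), fun F => ?_⟩
  have key : ∀ i : ι, (b.equiv b' (Equiv.refl _)).symm (v i) = (g i)⁻¹ • v i := by
    intro i
    have h1 : (b.equiv b' (Equiv.refl _)).symm (b' (Sum.inl i)) = b (Sum.inl i) := by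
      rw [LinearEquiv.symm_apply_eq, Module.Basis.equiv_apply, Equiv.refl_apply]
    have h2 : b' (Sum.inl i) = g i • v i := by
      rw [hb', Module.Basis.isUnitSMul_apply, sumExtend_inl v hv i]; rfl
    have h3 : (b.equiv b' (Equiv.refl _)).symm (g i • v i) = v i := by
      rw [← h2, h1, sumExtend_inl v hv i]
    rw [map_smul] at h3
    have hgne : g i ≠ 0 := ne_of_gt (hg i)
    calc (b.equiv b' (Equiv.refl _)).symm (v i)
        = (g i)⁻¹ • (g i • (b.equiv b' (Equiv.refl _)).symm (v i)) := by
          rw [smul_smul, inv_mul_cancel₀ hgne, one_smul]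
      _ = (g i)⁻¹ • v i := by rw [h3]
  refine Finset.sum_congr rfl fun i _ => ?_
  congr 1
  rw [LinearMap.comp_apply, LinearEquiv.coe_coe, key i, map_smul, norm_smul,
    Real.norm_eq_abs, abs_of_pos (inv_pos.mpr (hg i))]
  field_simp
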